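/- Let G : M → M' be a colimit-preserving symmetric monoidal functor between presentable symmetric monoidal categories, with lax symmetric monoidal right adjoint G^R. For an M-algebroid C and an M'-algebroid D, there is an equivalence of M-algebroids Funct(C, (G^R)_! D) ≃ (G^R)_! Funct(G_! C, D), natural in C and D. -/

import Mathlib

open CategoryTheory CategoryTheory.Limits CategoryTheory.MonoidalCategory

universe v u v' u'

namespace Stmt13Aux

/-- Vertical naturality of the mates correspondence with respect to 2-cells between the
vertical functors. -/
lemma whiskerLeft_mateEquiv {C : Type*} {D : Type*} {E : Type*} {F' : Type*}
    [Category C] [Category D] [Category E] [Category F']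
    {G G' : C ⥤ E} {H H' : D ⥤ F'} {L₁ : C ⥤ D} {R₁ : D ⥤ C} {L₂ : E ⥤ F'} {R₂ : F' ⥤ E}
    (adj₁ : L₁ ⊣ R₁) (adj₂ : L₂ ⊣ R₂) (γ : G ⟶ G') (δ : H ⟶ H')
    (α : G ⋙ L₂ ⟶ L₁ ⋙ H) (α' : G' ⋙ L₂ ⟶ L₁ ⋙ H')
    (hyp : Functor.whiskerRight γ L₂ ≫ α' = α ≫ Functor.whiskerLeft L₁ δ) :
    Functor.whiskerLeft R₁ γ ≫ mateEquiv adj₁ adj₂ α' =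
      mateEquiv adj₁ adj₂ α ≫ Functor.whiskerRight δ R₂ := by
  ext d
  have h := congr_app hyp (R₁.obj d)
  simp only [Functor.comp_obj, NatTrans.comp_app, Functor.whiskerRight_app, Functor.whiskerLeft_app] at h
  erw [mateEquiv_apply, mateEquiv_apply]
  simp only [mateEquiv_apply, NatTrans.comp_app, Functor.whiskerLeft_app, Functor.whiskerRight_app,
    Functor.comp_obj, Functor.id_obj, Category.assoc, TwoSquare.natTrans, TwoSquare.mk,
    Functor.rightUnitor_inv_app, Functor.leftUnitor_hom_app, Functor.associator_hom_app,
    Functor.associator_inv_app, Category.id_comp, Category.comp_id, Functor.map_id]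
  rw [← adj₂.unit_naturality_assoc (γ.app (R₁.obj d))]
  rw [← R₂.map_comp_assoc, h, R₂.map_comp_assoc]
  simp only [Functor.comp_map, ← R₂.map_comp, ← δ.naturality]

end Stmt13Aux

/-- Let `G : M → M'` be a colimit-preserving symmetric monoidal functor
between presentable symmetric monoidal categories, with lax symmetric monoidal
right adjoint `G^R`.  Then for an `M`-algebroid `C` and an `M'`-algebroid `D`
there is an equivalence of `M`-algebroids
`Funct(C, (G^R)_! D) ≃ (G^R)_! Funct(G_! C, D)`, natural in `C` and `D`.

We formalize this at the level of the closed symmetric monoidal categories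
`𝒜 = Algbrd(M)` and `ℬ = Algbrd(M')` (which are presentable symmetric
monoidal, with internal Homs `Funct`): given a strong symmetric monoidal left
adjoint `F = G_! : 𝒜 ⥤ ℬ` with right adjoint `R = (G^R)_!`, the two
bifunctors `(C, D) ↦ Funct(C, R D)` and `(C, D) ↦ R (Funct(F C, D))` from
`𝒜ᵒᵖ × ℬ` to `𝒜` are naturally isomorphic. -/
theorem stmt13 {A : Type u} [Category.{v} A] [MonoidalCategory A] [SymmetricCategory A]
    [MonoidalClosed A] [HasLimits A] [HasColimits A]
    {B : Type u'} [Category.{v'} B] [MonoidalCategory B] [SymmetricCategory B]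
    [MonoidalClosed B] [HasLimits B] [HasColimits B]
    (F : A ⥤ B) [F.Monoidal] [PreservesColimits F] (R : B ⥤ A) (adj : F ⊣ R) :
    Nonempty
      (((Functor.id Aᵒᵖ).prod R ⋙ Functor.uncurry.obj MonoidalClosed.internalHom) ≅
        (F.op.prod (Functor.id B) ⋙ Functor.uncurry.obj MonoidalClosed.internalHom ⋙ R)) := by
  classical
  -- the structural 2-cell on left adjoints
  let θ : ∀ c : A, F ⋙ tensorLeft (F.obj c) ⟶ tensorLeft c ⋙ F :=
    fun c => (Functor.Monoidal.commTensorLeft F c).hom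
  -- its mate, the lax structural map of the internal hom
  let ν : ∀ c : A, ihom c ⋙ F ⟶ F ⋙ ihom (F.obj c) :=
    fun c => mateEquiv (ihom.adjunction c) (ihom.adjunction (F.obj c)) (θ c)
  -- the mate of ν, which is the desired comparison map
  let η : ∀ c : A, (R ⋙ ihom c ⟶ ihom (F.obj c) ⋙ R) :=
    fun c => mateEquiv adj adj (ν c)
  -- η is an isomorphism, being a conjugate of the iso θ across composite adjunctions
  have hη : ∀ c : A, η c =
      (conjugateIsoEquiv ((ihom.adjunction c).comp adj)
        (adj.comp (ihom.adjunction (F.obj c))) (Functor.Monoidal.commTensorLeft F c)).hom := by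
    intro c
    simp only [η, ν, θ, conjugateIsoEquiv_apply_hom]
    exact iterated_mateEquiv_conjugateEquiv ..
  have hiso : ∀ c : A, IsIso (η c) := by
    intro c
    rw [hη c]
    infer_instance
  -- naturality of ν in the first variable
  have hν : ∀ {c c' : A} (f : c' ⟶ c),
      Functor.whiskerRight (MonoidalClosed.pre f) F ≫ ν c' =
        ν c ≫ Functor.whiskerLeft F (MonoidalClosed.pre (F.map f)) := by
    intro c c' f
    have h1 := conjugateEquiv_mateEquiv_vcomp (ihom.adjunction c) (ihom.adjunction c')
      (ihom.adjunction (F.obj c')) ((tensoringLeft A).map f) (θ c')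
    have h2 := mateEquiv_conjugateEquiv_vcomp (ihom.adjunction c) (ihom.adjunction (F.obj c))
      (ihom.adjunction (F.obj c')) (θ c) ((tensoringLeft B).map (F.map f))
    change mateEquiv _ _ (θ c' ≫ Functor.whiskerRight ((tensoringLeft A).map f) F) = _ at h1
    change mateEquiv _ _ (Functor.whiskerLeft F ((tensoringLeft B).map (F.map f)) ≫ θ c) = _ at h2
    have key : θ c' ≫ Functor.whiskerRight ((tensoringLeft A).map f) F =
        Functor.whiskerLeft F ((tensoringLeft B).map (F.map f)) ≫ θ c := by
      ext X
      simp [θ, Functor.LaxMonoidal.μ_natural_left]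
    rw [key] at h1
    rw [show MonoidalClosed.pre f
        = conjugateEquiv (ihom.adjunction c) (ihom.adjunction c') ((tensoringLeft A).map f)
        from rfl,
      show MonoidalClosed.pre (F.map f)
        = conjugateEquiv (ihom.adjunction (F.obj c)) (ihom.adjunction (F.obj c'))
            ((tensoringLeft B).map (F.map f)) from rfl]
    rw [show ν c' = mateEquiv (ihom.adjunction c') (ihom.adjunction (F.obj c')) (θ c') from rfl,
      show ν c = mateEquiv (ihom.adjunction c) (ihom.adjunction (F.obj c)) (θ c) from rfl]
    exact h1.symm.trans h2
  -- naturality of η in the first variable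
  have hηnat : ∀ {c c' : A} (f : c' ⟶ c),
      Functor.whiskerLeft R (MonoidalClosed.pre f) ≫ η c' =
        η c ≫ Functor.whiskerRight (MonoidalClosed.pre (F.map f)) R :=
    fun f => Stmt13Aux.whiskerLeft_mateEquiv adj adj _ _ _ _ (hν f)
  refine ⟨NatIso.ofComponents
    (fun X => haveI := hiso X.1.unop; @asIso _ _ _ _ ((η X.1.unop).app X.2) (NatIso.isIso_app_of_isIso _ _)) ?_⟩
  rintro ⟨c₁, D₁⟩ ⟨c₂, D₂⟩ ⟨f, g⟩
  have h1 := congr_app (hηnat f.unop) D₁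
  simp only [Functor.comp_obj, NatTrans.comp_app, Functor.whiskerLeft_app, Functor.whiskerRight_app] at h1
  have h2 := (η c₂.unop).naturality g
  simp only [Functor.comp_obj, Functor.comp_map] at h2 ⊢
  simp only [Functor.prod_obj, Functor.prod_map, Functor.id_obj, Functor.id_map, Functor.op_obj,
    Functor.op_map, Functor.uncurry, asIso_hom, MonoidalClosed.internalHom_obj,
    MonoidalClosed.internalHom_map, Category.assoc]
  erw [asIso_hom, asIso_hom, h2, reassoc_of% h1]; simp only [Functor.map_comp]; rfl
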